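/- Let n ≥ 2 and d ≥ 1 be integers. The EGH matrix M^I_{n,d} is a (d+1)-decodable rateless matrix: for every i with 2 ≤ i ≤ d+1, the submatrix consisting of its first m(n,i−1) = Σ_{j=1}^{k_{i−1}} p_j rows (where k_{i−1} is the smallest positive integer with Π_{k_{i−1}} ≥ n^{i−1}) is i-decodable; in particular, setting m_1 = m_2 = m(n,1) and m_i = m(n,i−1) for 2 ≤ i ≤ d+1 gives a nondecreasing decodability profile (m_1,…,m_{d+1}) with m_{d+1} equal to the number of rows of M^I_{n,d}. -/

import Mathlib

/-- A binary matrix (rows indexed by `ρ`, columns by `γ`, with `M r c` meaning the entry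
in row `r` and column `c` equals 1) is `d`-decodable if for every nonempty set `S` of at
most `d` columns there exists a row having exactly one entry equal to 1 among the columns
of `S`. -/
def DDecodable {ρ γ : Type*} (M : ρ → γ → Prop) (d : ℕ) : Prop :=
  ∀ S : Finset γ, S.Nonempty → S.card ≤ d → ∃ r : ρ, ∃! c, c ∈ S ∧ M r c

private lemma prod_nth_prime_dvd (D : ℕ) : ∀ K, (∀ j ∈ Finset.range K, Nat.nth Nat.Prime j ∣ D) →
    ∏ j ∈ Finset.range K, Nat.nth Nat.Prime j ∣ D := by
  intro K
  induction K with
  | zero => simp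
  | succ K ih =>
    intro h
    rw [Finset.prod_range_succ]
    refine Nat.Coprime.mul_dvd_of_dvd_of_dvd ?_
      (ih fun j hj => h j (Finset.mem_range.2 (Nat.lt_succ_of_lt (Finset.mem_range.1 hj))))
      (h K (Finset.self_mem_range_succ K))
    apply Nat.Coprime.prod_left
    intro j hj
    exact (Nat.coprime_primes (Nat.prime_nth_prime j) (Nat.prime_nth_prime K)).2
      (fun e => absurd (Nat.nth_injective Nat.infinite_setOf_prime e)
        (Nat.ne_of_lt (Finset.mem_range.1 hj)))

/-- The EGH matrix `M^I_{n,d}` (rows indexed by pairs `(j,x)`, `j ∈ {1,…,k_d}`,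
`x ∈ {0,…,p_j−1}`, ordered with all rows of block `j` before those of block `j+1`, so that
row `(j,x)` has position `p_1 + ⋯ + p_{j−1} + x`; entry at row `(j,x)`, column `y` is 1 iff
`y+1 ≡ x (mod p_j)`) is a `(d+1)`-decodable rateless matrix: for every `2 ≤ i ≤ d+1`, the
submatrix of its first `m(n,i−1) = Σ_{j≤k_{i−1}} p_j` rows is `i`-decodable; moreover the
profile `m_1 = m_2 = m(n,1)`, `m_i = m(n,i−1)` is nondecreasing (with every entry positive)
and `m_{d+1} = m(n,d)` equals the total number of rows of `M^I_{n,d}`.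
Here `kf i = k_i` is the smallest positive integer with `p_1⋯p_{k_i} ≥ n^i`, and
`mf i = m(n,i)`. -/
theorem egh_matrix_rateless (n d : ℕ) (hn : 2 ≤ n) (hd : 1 ≤ d)
    (kf : ℕ → ℕ)
    (hkf : ∀ i, 1 ≤ i →
      1 ≤ kf i ∧ n ^ i ≤ ∏ j ∈ Finset.range (kf i), Nat.nth Nat.Prime j ∧
        ∀ k', 1 ≤ k' → k' < kf i →
          ∏ j ∈ Finset.range k', Nat.nth Nat.Prime j < n ^ i)
    (mf : ℕ → ℕ)
    (hmf : ∀ i, mf i = ∑ j ∈ Finset.range (kf i), Nat.nth Nat.Prime j) :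
    (∀ i, 2 ≤ i → i ≤ d + 1 →
      DDecodable
        (fun (r : {r : (j : Fin (kf d)) × Fin (Nat.nth Nat.Prime j.val) //
            (∑ j' ∈ Finset.range r.1.val, Nat.nth Nat.Prime j') + (r.2 : ℕ) < mf (i - 1)})
          (y : Fin n) =>
          ((y : ℕ) + 1) % Nat.nth Nat.Prime r.1.1.val = (r.1.2 : ℕ))
        i)
    ∧ 0 < mf 1
    ∧ (∀ i j, 1 ≤ i → i ≤ j → j ≤ d → mf i ≤ mf j)
    ∧ Fintype.card ((j : Fin (kf d)) × Fin (Nat.nth Nat.Prime j.val)) = mf d := by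
  have hkmono : ∀ a b, 1 ≤ a → a ≤ b → kf a ≤ kf b := by
    intro a b ha hab
    by_contra hlt
    push_neg at hlt
    have h1 := hkf a ha
    have h2 := hkf b (ha.trans hab)
    have h3 := h1.2.2 (kf b) h2.1 hlt
    have h4 : n ^ a ≤ n ^ b := Nat.pow_le_pow_right (by omega) hab
    omega
  refine ⟨?_, ?_, ?_, ?_⟩
  · intro i h2i hid S hS hcard
    classical
    set P := Nat.nth Nat.Prime with hPdef
    -- the largest element of S
    set y0 := S.max' hS with hy0
    have hy0S : y0 ∈ S := S.max'_mem hS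
    have h1i : 1 ≤ i - 1 := by omega
    obtain ⟨hK1, hKge, _⟩ := hkf (i - 1) h1i
    -- key claim: some prime among the first kf (i-1) separates y0 from the rest of S
    have key : ∃ j, j < kf (i - 1) ∧ ∀ y ∈ S, y ≠ y0 → ¬ (P j ∣ (y0 : ℕ) - (y : ℕ)) := by
      by_contra hcon
      push_neg at hcon
      set D := ∏ y ∈ S.erase y0, ((y0 : ℕ) - (y : ℕ)) with hD
      have hdvd : ∀ j ∈ Finset.range (kf (i - 1)), P j ∣ D := by
        intro j hj
        obtain ⟨y, hyS, hyne, hdvd⟩ := hcon j (Finset.mem_range.1 hj)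
        exact hdvd.trans (Finset.dvd_prod_of_mem _ (Finset.mem_erase.2 ⟨hyne, hyS⟩))
      have hPi : ∏ j ∈ Finset.range (kf (i - 1)), P j ∣ D := prod_nth_prime_dvd D _ hdvd
      have hDpos : 0 < D := by
        apply Finset.prod_pos
        intro y hy
        have hyne := (Finset.mem_erase.1 hy).1
        have hle : (y : ℕ) ≤ (y0 : ℕ) := S.le_max' y (Finset.mem_erase.1 hy).2
        have : (y : ℕ) ≠ (y0 : ℕ) := fun e => hyne (Fin.ext e)
        omega
      have hDle : D ≤ (n - 1) ^ (S.erase y0).card := by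
        apply Finset.prod_le_pow_card
        intro y _
        have := y0.isLt
        omega
      have hcard' : (S.erase y0).card ≤ i - 1 := by
        rw [Finset.card_erase_of_mem hy0S]; omega
      have hD2 : D ≤ (n - 1) ^ (i - 1) :=
        hDle.trans (Nat.pow_le_pow_right (by omega) hcard')
      have hlt : (n - 1) ^ (i - 1) < n ^ (i - 1) :=
        Nat.pow_lt_pow_left (by omega) (by omega)
      have := Nat.le_of_dvd hDpos hPi
      omega
    obtain ⟨j, hjK, hjsep⟩ := key
    have hjd : j < kf d := hjK.trans_le (hkmono (i - 1) d h1i (by omega))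
    have hPj : 0 < P j := (Nat.prime_nth_prime j).pos
    set x : ℕ := ((y0 : ℕ) + 1) % P j with hx
    have hxlt : x < P j := Nat.mod_lt _ hPj
    have hpos : (∑ j' ∈ Finset.range j, P j') + x < mf (i - 1) := by
      rw [hmf]
      calc (∑ j' ∈ Finset.range j, P j') + x
          < ∑ j' ∈ Finset.range (j + 1), P j' := by
            rw [Finset.sum_range_succ]; omega
        _ ≤ ∑ j' ∈ Finset.range (kf (i - 1)), P j' :=
            Finset.sum_le_sum_of_subset (Finset.range_subset_range.2 hjK)
    refine ⟨⟨⟨⟨j, hjd⟩, ⟨x, hxlt⟩⟩, hpos⟩, y0, ⟨hy0S, rfl⟩, ?_⟩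
    rintro y ⟨hyS, hyM⟩
    by_contra hne
    apply hjsep y hyS hne
    have hle : (y : ℕ) + 1 ≤ (y0 : ℕ) + 1 := by
      have := S.le_max' y hyS
      omega
    have : ((y : ℕ) + 1) % P j = ((y0 : ℕ) + 1) % P j := hyM
    have hmod : P j ∣ ((y0 : ℕ) + 1) - ((y : ℕ) + 1) :=
      (Nat.modEq_iff_dvd' hle).1 this
    have : ((y0 : ℕ) + 1) - ((y : ℕ) + 1) = (y0 : ℕ) - (y : ℕ) := by omega
    rwa [this] at hmod
  · rw [hmf]
    obtain ⟨hK1, _, _⟩ := hkf 1 le_rfl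
    calc 0 < Nat.nth Nat.Prime 0 := (Nat.prime_nth_prime 0).pos
      _ ≤ ∑ j ∈ Finset.range (kf 1), Nat.nth Nat.Prime j :=
        Finset.single_le_sum (fun _ _ => Nat.zero_le _) (Finset.mem_range.2 hK1)
  · intro a b ha hab hbd
    rw [hmf, hmf]
    exact Finset.sum_le_sum_of_subset (Finset.range_subset_range.2 (hkmono a b ha hab))
  · rw [hmf]
    rw [Fintype.card_sigma]
    simp [Finset.sum_range fun j => Nat.nth Nat.Prime j]
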